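/- Let X and x be such that rows of X and x are iid random vectors in ℝ^k with E[x xᵀ] = I_k, XᵀX almost surely invertible, and x having at least two entries (k ≥ 2). Let X' be obtained from X by deleting its last column and x' from x by deleting its last entry, with X'ᵀX' almost surely invertible. Then E[n·xᵀ(XᵀX)⁻¹x] ≥ E[n·x'ᵀ(X'ᵀX')⁻¹x'] + 1. -/

import Mathlib

open MeasureTheory ProbabilityTheory Matrix Finset

namespace KappaAux

variable {m : ℕ}

noncomputable section

/-- principal submatrix deleting last row/col -/
def sub1 (A : Matrix (Fin (m+1)) (Fin (m+1)) ℝ) : Matrix (Fin m) (Fin m) ℝ :=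
  A.submatrix Fin.castSucc Fin.castSucc

def bvec (A : Matrix (Fin (m+1)) (Fin (m+1)) ℝ) : Fin m → ℝ :=
  fun j => A j.castSucc (Fin.last m)

def cval (A : Matrix (Fin (m+1)) (Fin (m+1)) ℝ) : ℝ := A (Fin.last m) (Fin.last m)

def wvec (A : Matrix (Fin (m+1)) (Fin (m+1)) ℝ) : Fin m → ℝ := (sub1 A)⁻¹ *ᵥ bvec A

def sval (A : Matrix (Fin (m+1)) (Fin (m+1)) ℝ) : ℝ := cval A - bvec A ⬝ᵥ wvec A

lemma dot_snoc (p : Fin m → ℝ) (θ : ℝ) (v : Fin (m+1) → ℝ) :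
    Fin.snoc p θ ⬝ᵥ v = p ⬝ᵥ (v ∘ Fin.castSucc) + θ * v (Fin.last m) := by
  simp [dotProduct, Fin.sum_univ_castSucc]

lemma mulVec_snoc_comp (A : Matrix (Fin (m+1)) (Fin (m+1)) ℝ) (p : Fin m → ℝ) (θ : ℝ) :
    (A *ᵥ Fin.snoc p θ) ∘ Fin.castSucc = sub1 A *ᵥ p + θ • bvec A := by
  funext i
  simp [mulVec, dotProduct, Fin.sum_univ_castSucc, sub1, bvec, mul_comm]

lemma mulVec_snoc_last (A : Matrix (Fin (m+1)) (Fin (m+1)) ℝ) (p : Fin m → ℝ) (θ : ℝ) :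
    (A *ᵥ Fin.snoc p θ) (Fin.last m) = (fun j => A (Fin.last m) j.castSucc) ⬝ᵥ p + θ * cval A := by
  simp [mulVec, dotProduct, Fin.sum_univ_castSucc, cval, mul_comm]

lemma snoc_quad (A : Matrix (Fin (m+1)) (Fin (m+1)) ℝ) (hA : Aᵀ = A) (p : Fin m → ℝ) (θ : ℝ) :
    Fin.snoc p θ ⬝ᵥ (A *ᵥ Fin.snoc p θ)
      = p ⬝ᵥ (sub1 A *ᵥ p) + 2*θ*(bvec A ⬝ᵥ p) + θ^2 * cval A := by
  have hsym : ∀ i j, A i j = A j i := fun i j => by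
    conv_lhs => rw [← hA]
    simp [Matrix.transpose_apply]
  rw [dot_snoc, mulVec_snoc_comp, mulVec_snoc_last]
  have h1 : (fun j => A (Fin.last m) j.castSucc) ⬝ᵥ p = bvec A ⬝ᵥ p := by
    apply Finset.sum_congr rfl
    intro j _
    simp [bvec, hsym (Fin.last m) j.castSucc]
  have h2 : p ⬝ᵥ (sub1 A *ᵥ p + θ • bvec A) = p ⬝ᵥ (sub1 A *ᵥ p) + θ * (bvec A ⬝ᵥ p) := by
    rw [dotProduct_add, dotProduct_smul, smul_eq_mul, dotProduct_comm p (bvec A)]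
  rw [h1, h2]
  ring

lemma dot_mulVec_symm {k : ℕ} (M : Matrix (Fin k) (Fin k) ℝ) (hM : Mᵀ = M)
    (u v : Fin k → ℝ) : u ⬝ᵥ (M *ᵥ v) = (M *ᵥ u) ⬝ᵥ v := by
  rw [dotProduct_mulVec]
  congr 1
  rw [← hM, vecMul_transpose, hM]

lemma le_inv_quad {k : ℕ} (A : Matrix (Fin k) (Fin k) ℝ) (hU : IsUnit A.det)
    (hsemi : A.PosSemidef) (u v : Fin k → ℝ) :
    2*(u ⬝ᵥ v) - u ⬝ᵥ (A *ᵥ u) ≤ v ⬝ᵥ (A⁻¹ *ᵥ v) := by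
  have hsymT : Aᵀ = A := by
    have := hsemi.1
    rwa [IsHermitian, conjTranspose_eq_transpose_of_trivial] at this
  set e := A⁻¹ *ᵥ v - u with he
  have h0 : 0 ≤ e ⬝ᵥ (A *ᵥ e) := by simpa using hsemi.dotProduct_mulVec_nonneg e
  have hAe : A *ᵥ e = v - A *ᵥ u := by
    rw [he, mulVec_sub, mulVec_mulVec, Matrix.mul_nonsing_inv A hU, one_mulVec]
  rw [hAe, he] at h0
  have h1 : (A⁻¹ *ᵥ v - u) ⬝ᵥ (v - A *ᵥ u)
      = (A⁻¹ *ᵥ v) ⬝ᵥ v - (A⁻¹ *ᵥ v) ⬝ᵥ (A *ᵥ u) - u ⬝ᵥ v + u ⬝ᵥ (A *ᵥ u) := by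
    rw [sub_dotProduct, dotProduct_sub, dotProduct_sub]; ring
  have h2 : (A⁻¹ *ᵥ v) ⬝ᵥ (A *ᵥ u) = v ⬝ᵥ u := by
    rw [dot_mulVec_symm A hsymT, mulVec_mulVec, Matrix.mul_nonsing_inv A hU, one_mulVec]
  have h3 : (A⁻¹ *ᵥ v) ⬝ᵥ v = v ⬝ᵥ (A⁻¹ *ᵥ v) := dotProduct_comm _ _
  have h4 : v ⬝ᵥ u = u ⬝ᵥ v := dotProduct_comm _ _
  rw [h1, h2, h3, h4] at h0
  linarith

lemma posDef_of {k : ℕ} (A : Matrix (Fin k) (Fin k) ℝ) (hsemi : A.PosSemidef)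
    (hU : IsUnit A.det) : A.PosDef := by
  refine PosDef.of_dotProduct_mulVec_pos hsemi.1 (fun z hz => ?_)
  rcases (hsemi.dotProduct_mulVec_nonneg z).lt_or_eq with h | h
  · simpa using h
  · exfalso
    have h0 : star z ⬝ᵥ A *ᵥ z = 0 := h.symm
    have hz0 : A *ᵥ z = 0 := (hsemi.dotProduct_mulVec_zero_iff z).1 h0
    have hinj : Function.Injective A.mulVec :=
      Matrix.mulVec_injective_iff_isUnit.2 ((Matrix.isUnit_iff_isUnit_det A).2 hU)
    exact hz (hinj (by rw [hz0, mulVec_zero]))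

lemma transpose_eq_of_posSemidef {k : ℕ} {A : Matrix (Fin k) (Fin k) ℝ}
    (h : A.IsHermitian) : Aᵀ = A := by
  rwa [IsHermitian, conjTranspose_eq_transpose_of_trivial] at h

lemma sub1_transpose {A : Matrix (Fin (m+1)) (Fin (m+1)) ℝ} (hA : Aᵀ = A) :
    (sub1 A)ᵀ = sub1 A := by
  ext i j
  have : A j.castSucc i.castSucc = A i.castSucc j.castSucc := by
    conv_lhs => rw [← hA]
    simp [Matrix.transpose_apply]
  simp [sub1, Matrix.transpose_apply, this]

lemma posDef_sub1 {A : Matrix (Fin (m+1)) (Fin (m+1)) ℝ} (hA : A.PosDef) :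
    (sub1 A).PosDef := by
  have hsymT : Aᵀ = A := transpose_eq_of_posSemidef hA.1
  refine PosDef.of_dotProduct_mulVec_pos ?_ (fun z hz => ?_)
  · rw [IsHermitian, conjTranspose_eq_transpose_of_trivial]
    exact sub1_transpose hsymT
  · have hne : (Fin.snoc z 0 : Fin (m+1) → ℝ) ≠ 0 := by
      intro h
      apply hz
      funext i
      have := congrFun h i.castSucc
      simpa using this
    have := hA.dotProduct_mulVec_pos hne
    have hq : Fin.snoc z 0 ⬝ᵥ (A *ᵥ Fin.snoc z 0)
        = z ⬝ᵥ (sub1 A *ᵥ z) := by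
      rw [snoc_quad A hsymT]; ring
    simp only [star_trivial] at this ⊢
    rw [hq] at this
    simpa using this

lemma sval_pos {A : Matrix (Fin (m+1)) (Fin (m+1)) ℝ} (hA : A.PosDef) : 0 < sval A := by
  have hsymT : Aᵀ = A := transpose_eq_of_posSemidef hA.1
  have hA' : (sub1 A).PosDef := posDef_sub1 hA
  have hU' : IsUnit (sub1 A).det := hA'.det_pos.ne'.isUnit
  have hne : (Fin.snoc (-(wvec A)) 1 : Fin (m+1) → ℝ) ≠ 0 := by
    intro h
    have := congrFun h (Fin.last m)
    simp at this
  have hpos := hA.dotProduct_mulVec_pos hne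
  simp only [star_trivial] at hpos
  rw [snoc_quad A hsymT] at hpos
  have hmv : sub1 A *ᵥ (-(wvec A)) = -(bvec A) := by
    rw [mulVec_neg, wvec, mulVec_mulVec, Matrix.mul_nonsing_inv _ hU', one_mulVec]
  rw [hmv] at hpos
  have h1 : (-(wvec A)) ⬝ᵥ (-(bvec A)) = bvec A ⬝ᵥ wvec A := by
    rw [neg_dotProduct, dotProduct_neg, neg_neg, dotProduct_comm]
  have h2 : bvec A ⬝ᵥ (-(wvec A)) = -(bvec A ⬝ᵥ wvec A) := by
    rw [dotProduct_neg]
  rw [h1, h2] at hpos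
  have : 0 < cval A - bvec A ⬝ᵥ wvec A := by linarith
  simpa [sval] using this

lemma sval_le_cval {A : Matrix (Fin (m+1)) (Fin (m+1)) ℝ} (hA : A.PosDef) :
    sval A ≤ cval A := by
  have hA' : (sub1 A).PosDef := posDef_sub1 hA
  have hinv : ((sub1 A)⁻¹).PosDef := hA'.inv
  have h0 : 0 ≤ bvec A ⬝ᵥ wvec A := by
    have := hinv.posSemidef.dotProduct_mulVec_nonneg (bvec A)
    simpa [wvec] using this
  simp only [sval]
  linarith

/-- The key pointwise inequality. -/
lemma key_ineq {A : Matrix (Fin (m+1)) (Fin (m+1)) ℝ} (hA : A.PosDef)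
    (v : Fin (m+1) → ℝ) :
    (v ∘ Fin.castSucc) ⬝ᵥ ((sub1 A)⁻¹ *ᵥ (v ∘ Fin.castSucc))
      + (v (Fin.last m) - wvec A ⬝ᵥ (v ∘ Fin.castSucc))^2 / sval A
      ≤ v ⬝ᵥ (A⁻¹ *ᵥ v) := by
  have hsymT : Aᵀ = A := transpose_eq_of_posSemidef hA.1
  have hA' : (sub1 A).PosDef := posDef_sub1 hA
  have hU' : IsUnit (sub1 A).det := hA'.det_pos.ne'.isUnit
  have hU : IsUnit A.det := hA.det_pos.ne'.isUnit
  have hsymI : ((sub1 A)⁻¹)ᵀ = (sub1 A)⁻¹ :=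
    transpose_eq_of_posSemidef hA'.inv.1
  have hs : 0 < sval A := sval_pos hA
  set v' : Fin m → ℝ := v ∘ Fin.castSucc with hv'
  set Q : ℝ := v' ⬝ᵥ ((sub1 A)⁻¹ *ᵥ v') with hQ
  set d : ℝ := v (Fin.last m) - wvec A ⬝ᵥ v' with hd
  set θ : ℝ := d / sval A with hθ
  set p : Fin m → ℝ := (sub1 A)⁻¹ *ᵥ v' - θ • wvec A with hp
  refine le_trans ?_ (le_inv_quad A hU hA.posSemidef (Fin.snoc p θ) v)
  -- compute the two dot products
  have hudot : Fin.snoc p θ ⬝ᵥ v = p ⬝ᵥ v' + θ * v (Fin.last m) := dot_snoc p θ v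
  have hquad := snoc_quad A hsymT p θ
  -- p ⬝ᵥ v'
  have hwv : (wvec A) ⬝ᵥ v' = ((sub1 A)⁻¹ *ᵥ v') ⬝ᵥ bvec A := by
    rw [wvec, ← dot_mulVec_symm _ hsymI (bvec A) v', dotProduct_comm]
  have hpv : p ⬝ᵥ v' = Q - θ * (wvec A ⬝ᵥ v') := by
    rw [hp, sub_dotProduct, smul_dotProduct, smul_eq_mul, hQ,
      dotProduct_comm ((sub1 A)⁻¹ *ᵥ v') v']
  -- sub1 A *ᵥ p
  have hmvp : sub1 A *ᵥ p = v' - θ • bvec A := by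
    rw [hp, mulVec_sub, mulVec_mulVec, Matrix.mul_nonsing_inv _ hU', one_mulVec,
      mulVec_smul, wvec, mulVec_mulVec, Matrix.mul_nonsing_inv _ hU', one_mulVec]
  have hpb : bvec A ⬝ᵥ p = wvec A ⬝ᵥ v' - θ * (bvec A ⬝ᵥ wvec A) := by
    rw [hp, dotProduct_sub, dotProduct_smul, smul_eq_mul]
    congr 1
    rw [hwv, dotProduct_comm]
  have hpAp : p ⬝ᵥ (sub1 A *ᵥ p)
      = Q - θ * (wvec A ⬝ᵥ v') - θ * (wvec A ⬝ᵥ v') + θ^2 * (bvec A ⬝ᵥ wvec A) := by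
    rw [hmvp, dotProduct_sub, dotProduct_smul, smul_eq_mul, hpv]
    have : p ⬝ᵥ bvec A = wvec A ⬝ᵥ v' - θ * (bvec A ⬝ᵥ wvec A) := by
      rw [dotProduct_comm]; exact hpb
    rw [this]; ring
  -- now combine
  rw [hudot, hquad, hpAp, hpb, hpv]
  have hsval : sval A = cval A - bvec A ⬝ᵥ wvec A := rfl
  have hθs : θ * sval A = d := by
    rw [hθ, div_mul_cancel₀ _ hs.ne']
  have expand : 2 * (Q - θ * (wvec A ⬝ᵥ v') + θ * v (Fin.last m))
      - (Q - θ * (wvec A ⬝ᵥ v') - θ * (wvec A ⬝ᵥ v') + θ^2 * (bvec A ⬝ᵥ wvec A)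
        + 2*θ*(wvec A ⬝ᵥ v' - θ * (bvec A ⬝ᵥ wvec A)) + θ^2 * cval A)
      = Q + 2*θ*d - θ^2 * sval A := by
    rw [hsval, hd]; ring
  rw [expand]
  have : 2*θ*d - θ^2 * sval A = d^2 / sval A := by
    field_simp [hθ]
    rw [← hθs]; ring
  linarith [this]

section Gram

variable {n : ℕ}

def gram (y : Fin n → Fin (m+1) → ℝ) : Matrix (Fin (m+1)) (Fin (m+1)) ℝ :=
  (Matrix.of fun i j => y i j)ᵀ * (Matrix.of fun i j => y i j)

lemma gram_posSemidef (y : Fin n → Fin (m+1) → ℝ) : (gram y).PosSemidef := by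
  have := Matrix.posSemidef_conjTranspose_mul_self (Matrix.of fun i j => y i j : Matrix (Fin n) (Fin (m+1)) ℝ)
  simpa [gram, Matrix.conjTranspose_eq_transpose_of_trivial] using this

lemma sub1_gram (y : Fin n → Fin (m+1) → ℝ) (X' : Matrix (Fin n) (Fin m) ℝ)
    (hX' : X' = (Matrix.of fun i j => y i j : Matrix (Fin n) (Fin (m+1)) ℝ).submatrix id Fin.castSucc) :
    X'ᵀ * X' = sub1 (gram y) := by
  subst hX'
  ext i j
  simp [Matrix.mul_apply, sub1, gram]

lemma cval_gram (y : Fin n → Fin (m+1) → ℝ) :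
    cval (gram y) = ∑ i : Fin n, (y i (Fin.last m))^2 := by
  simp [cval, gram, Matrix.mul_apply, sq]

lemma measurable_of_det {k : ℕ} : Measurable (fun g : Fin k → Fin k → ℝ => (Matrix.of g).det) := by
  simp_rw [Matrix.det_apply]
  apply Finset.measurable_sum
  intro σ _
  apply Measurable.const_smul
  apply Finset.measurable_prod
  intro i _
  exact (measurable_pi_apply _).comp (measurable_pi_apply _)

lemma measurable_of_inv {k : ℕ} (i j : Fin k) :
    Measurable (fun g : Fin k → Fin k → ℝ => (Matrix.of g)⁻¹ i j) := by
  simp_rw [Matrix.inv_def, Ring.inverse_eq_inv', Matrix.smul_apply, smul_eq_mul]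
  apply Measurable.mul
  · exact measurable_inv.comp measurable_of_det
  · simp_rw [Matrix.adjugate_apply]
    have : (fun g : Fin k → Fin k → ℝ => ((Matrix.of g).updateRow j (Pi.single i 1)).det)
        = (fun g : Fin k → Fin k → ℝ => (Matrix.of g).det) ∘
          (fun g : Fin k → Fin k → ℝ => fun a b =>
            if a = j then (Pi.single i (1:ℝ) : Fin k → ℝ) b else g a b) := by
      funext g
      simp only [Function.comp]
      congr 1
      ext a b
      simp [Matrix.updateRow_apply]
    rw [this]
    apply measurable_of_det.comp
    apply measurable_pi_lambda
    intro a
    apply measurable_pi_lambda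
    intro b
    by_cases h : a = j
    · simp [h]
    · simp only [h, if_false]
      exact (measurable_pi_apply _).comp (measurable_pi_apply _)

lemma measurable_gram_entry (i j : Fin (m+1)) :
    Measurable (fun y : Fin n → Fin (m+1) → ℝ => gram y i j) := by
  simp only [gram, Matrix.mul_apply, Matrix.transpose_apply, Matrix.of_apply]
  apply Finset.measurable_sum
  intro k _
  fun_prop

lemma measurable_sub1_fun :
    Measurable (fun y : Fin n → Fin (m+1) → ℝ => (fun a b => sub1 (gram y) a b : Fin m → Fin m → ℝ)) := by
  apply measurable_pi_lambda
  intro a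
  apply measurable_pi_lambda
  intro b
  exact measurable_gram_entry _ _

lemma measurable_sub1_inv_entry (i j : Fin m) :
    Measurable (fun y : Fin n → Fin (m+1) → ℝ => (sub1 (gram y))⁻¹ i j) :=
  (measurable_of_inv i j).comp measurable_sub1_fun

lemma measurable_wvec_gram (j : Fin m) :
    Measurable (fun y : Fin n → Fin (m+1) → ℝ => wvec (gram y) j) := by
  simp only [wvec, Matrix.mulVec, dotProduct, bvec]
  apply Finset.measurable_sum
  intro k _
  exact (measurable_sub1_inv_entry j k).mul (measurable_gram_entry _ _)

lemma measurable_sval_gram :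
    Measurable (fun y : Fin n → Fin (m+1) → ℝ => sval (gram y)) := by
  simp only [sval, cval, dotProduct, bvec]
  apply Measurable.sub (measurable_gram_entry _ _)
  apply Finset.measurable_sum
  intro k _
  exact (measurable_gram_entry _ _).mul (measurable_wvec_gram k)

end Gram

section Prob

open ENNReal

variable {Ω : Type*} [MeasurableSpace Ω]

/-- second moment identity for a linear functional of an isotropic random vector -/
lemma sq_dot_integral {k : ℕ} (P : Measure Ω) [IsProbabilityMeasure P]
    (x : Ω → Fin k → ℝ) (hx : Measurable x)
    (hsec : ∀ a b : Fin k, ∫ ω, x ω a * x ω b ∂P = if a = b then (1 : ℝ) else 0)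
    (cv : Fin k → ℝ) :
    Integrable (fun ω => (cv ⬝ᵥ x ω)^2) P ∧
      ∫ ω, (cv ⬝ᵥ x ω)^2 ∂P = ∑ a, (cv a)^2 := by
  have hxa : ∀ a, Measurable fun ω => x ω a := fun a => (measurable_pi_apply a).comp hx
  have hsq : ∀ a, Integrable (fun ω => x ω a * x ω a) P := by
    intro a
    by_contra h
    have h0 := integral_undef (μ := P) (f := fun ω => x ω a * x ω a) h
    rw [hsec a a] at h0
    simp at h0
  have hI2 : ∀ a b, Integrable (fun ω => x ω a * x ω b) P := by
    intro a b
    refine Integrable.mono' (((hsq a).add (hsq b)).div_const 2)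
      ((hxa a).mul (hxa b)).aestronglyMeasurable (Filter.Eventually.of_forall fun ω => ?_)
    rw [Real.norm_eq_abs, abs_mul]
    simp only [Pi.add_apply]
    nlinarith [sq_nonneg (|x ω a| - |x ω b|), abs_nonneg (x ω a), abs_nonneg (x ω b),
      sq_abs (x ω a), sq_abs (x ω b)]
  have hexp : ∀ ω, (cv ⬝ᵥ x ω)^2 = ∑ a, ∑ b, (cv a * cv b) * (x ω a * x ω b) := by
    intro ω
    rw [dotProduct, sq, Finset.sum_mul_sum]
    apply Finset.sum_congr rfl
    intro a _
    apply Finset.sum_congr rfl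
    intro b _
    ring
  have hIab : ∀ a b, Integrable (fun ω => (cv a * cv b) * (x ω a * x ω b)) P :=
    fun a b => (hI2 a b).const_mul _
  constructor
  · simp_rw [hexp]
    exact integrable_finset_sum _ fun a _ => integrable_finset_sum _ fun b _ => hIab a b
  · simp_rw [hexp]
    rw [integral_finset_sum _ fun a _ => integrable_finset_sum _ fun b _ => hIab a b]
    have : ∀ a : Fin k, ∫ ω, ∑ b, (cv a * cv b) * (x ω a * x ω b) ∂P
        = ∑ b, (cv a * cv b) * (if a = b then (1:ℝ) else 0) := by
      intro a
      rw [integral_finset_sum _ fun b _ => hIab a b]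
      apply Finset.sum_congr rfl
      intro b _
      rw [integral_const_mul, hsec a b]
    simp_rw [this]
    apply Finset.sum_congr rfl
    intro a _
    simp [Finset.sum_ite_eq, sq]

end Prob

end

end KappaAux

open MeasureTheory ProbabilityTheory Matrix KappaAux
open scoped ENNReal NNReal

/-- Proposition 1: if the `n` rows of the design matrix `X` and the test input `x` are
iid random vectors in `ℝ^{m+1}` (`m ≥ 1`, so at least two entries) with `E[x xᵀ] = I`,
and `XᵀX` (resp. `X'ᵀX'` for the submodel obtained by deleting the last coordinate) is
almost surely invertible, then `E[κ_x] ≥ E[κ_{x'}] + 1`, where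
`κ_x = n·xᵀ(XᵀX)⁻¹x`. -/
theorem expected_kappa_submodel {n m : ℕ} (hm : 1 ≤ m) (hn : 0 < n)
    {Ω : Type*} [MeasureSpace Ω] (P : Measure Ω) [IsProbabilityMeasure P]
    (r : Fin (n + 1) → Ω → (Fin (m + 1) → ℝ))
    (hmeas : ∀ i, Measurable (r i))
    (hiid : iIndepFun r P)
    (hident : ∀ i, P.map (r i) = P.map (r (Fin.last n)))
    (X : Ω → Matrix (Fin n) (Fin (m + 1)) ℝ)
    (hXdef : ∀ ω, X ω = Matrix.of fun i j => r i.castSucc ω j)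
    (x : Ω → Fin (m + 1) → ℝ) (hxdef : ∀ ω, x ω = r (Fin.last n) ω)
    (X' : Ω → Matrix (Fin n) (Fin m) ℝ)
    (hX'def : ∀ ω, X' ω = (X ω).submatrix id Fin.castSucc)
    (x' : Ω → Fin m → ℝ) (hx'def : ∀ ω, x' ω = fun j => x ω j.castSucc)
    (hsec : ∀ a b : Fin (m + 1),
      ∫ ω, x ω a * x ω b ∂P = if a = b then (1 : ℝ) else 0)
    (hinv : ∀ᵐ ω ∂P, IsUnit ((X ω)ᵀ * X ω).det)
    (hinv' : ∀ᵐ ω ∂P, IsUnit ((X' ω)ᵀ * X' ω).det)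
    (hκint : Integrable (fun ω => (n : ℝ) * (x ω ⬝ᵥ (((X ω)ᵀ * X ω)⁻¹ *ᵥ x ω))) P)
    (hκ'int : Integrable (fun ω => (n : ℝ) * (x' ω ⬝ᵥ (((X' ω)ᵀ * X' ω)⁻¹ *ᵥ x' ω))) P) :
    (∫ ω, (n : ℝ) * (x' ω ⬝ᵥ (((X' ω)ᵀ * X' ω)⁻¹ *ᵥ x' ω)) ∂P) + 1
      ≤ ∫ ω, (n : ℝ) * (x ω ⬝ᵥ (((X ω)ᵀ * X ω)⁻¹ *ᵥ x ω)) ∂P := by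
  classical
  set Yf : Ω → (Fin n → Fin (m+1) → ℝ) := fun ω i => r i.castSucc ω with hYf
  have hYmeas : Measurable Yf := measurable_pi_lambda _ fun i => hmeas _
  have hxer : x = r (Fin.last n) := funext hxdef
  have hxmeas : Measurable x := hxer ▸ hmeas _
  have hXA : ∀ ω, (X ω)ᵀ * X ω = gram (Yf ω) := fun ω => by rw [hXdef ω]; rfl
  have hX'A : ∀ ω, (X' ω)ᵀ * X' ω = sub1 (gram (Yf ω)) := fun ω =>
    sub1_gram (Yf ω) (X' ω) (by rw [hX'def ω, hXdef ω])
  have hx'c : ∀ ω, x' ω = x ω ∘ Fin.castSucc := fun ω => funext fun j => by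
    rw [hx'def ω]; rfl
  -- a.e. positivity facts
  have hdet : ∀ᵐ ω ∂P, (gram (Yf ω)).det ≠ 0 := by
    filter_upwards [hinv] with ω h
    rw [hXA ω] at h
    exact isUnit_iff_ne_zero.1 h
  have hPD : ∀ᵐ ω ∂P, (gram (Yf ω)).PosDef := by
    filter_upwards [hdet] with ω h
    exact posDef_of _ (gram_posSemidef _) (isUnit_iff_ne_zero.2 h)
  -- deficiency term
  set D : Ω → ℝ := fun ω =>
    (x ω (Fin.last m) - wvec (gram (Yf ω)) ⬝ᵥ (x ω ∘ Fin.castSucc))^2 / sval (gram (Yf ω))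
    with hDdef
  have hDmeas : Measurable D := by
    apply Measurable.div
    · apply Measurable.pow_const
      apply Measurable.sub
      · exact (measurable_pi_apply _).comp hxmeas
      · simp only [dotProduct]
        apply Finset.measurable_sum
        intro j _
        exact ((measurable_wvec_gram j).comp hYmeas).mul
          ((measurable_pi_apply _).comp hxmeas)
    · exact measurable_sval_gram.comp hYmeas
  have hDnn : ∀ᵐ ω ∂P, 0 ≤ D ω := by
    filter_upwards [hPD] with ω h
    exact div_nonneg (sq_nonneg _) (sval_pos h).le
  -- pointwise a.e. bound
  have hbound : ∀ᵐ ω ∂P,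
      (n : ℝ) * (x' ω ⬝ᵥ (((X' ω)ᵀ * X' ω)⁻¹ *ᵥ x' ω)) + (n : ℝ) * D ω
        ≤ (n : ℝ) * (x ω ⬝ᵥ (((X ω)ᵀ * X ω)⁻¹ *ᵥ x ω)) := by
    filter_upwards [hPD] with ω h
    rw [hXA ω, hX'A ω, hx'c ω]
    have hk := key_ineq h (x ω)
    have hn0 : (0:ℝ) ≤ n := Nat.cast_nonneg n
    have := mul_le_mul_of_nonneg_left hk hn0
    rw [mul_add] at this
    exact this
  -- integrability of n * D
  have hdiffint : Integrable (fun ω =>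
      (n : ℝ) * (x ω ⬝ᵥ (((X ω)ᵀ * X ω)⁻¹ *ᵥ x ω))
        - (n : ℝ) * (x' ω ⬝ᵥ (((X' ω)ᵀ * X' ω)⁻¹ *ᵥ x' ω))) P := hκint.sub hκ'int
  have hnDint : Integrable (fun ω => (n : ℝ) * D ω) P := by
    refine Integrable.mono' hdiffint ((measurable_const.mul hDmeas).aestronglyMeasurable) ?_
    filter_upwards [hbound, hDnn] with ω h1 h2
    rw [Real.norm_eq_abs, abs_of_nonneg (mul_nonneg (Nat.cast_nonneg n) h2)]
    linarith
  -- the core estimate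
  have hcore : (1 : ℝ) ≤ ∫ ω, (n : ℝ) * D ω ∂P := by
    set ν : Measure (Fin n → Fin (m+1) → ℝ) := P.map Yf with hν
    set μx : Measure (Fin (m+1) → ℝ) := P.map x with hμx
    haveI : IsProbabilityMeasure ν := Measure.isProbabilityMeasure_map hYmeas.aemeasurable
    haveI : IsProbabilityMeasure μx := Measure.isProbabilityMeasure_map hxmeas.aemeasurable
    -- independence of Yf and x
    have hYx : IndepFun Yf x P := by
      have hdisj : Disjoint (Finset.image Fin.castSucc (Finset.univ : Finset (Fin n)))
          ({Fin.last n} : Finset (Fin (n+1))) := by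
        rw [Finset.disjoint_singleton_right]
        simp only [Finset.mem_image, Finset.mem_univ, true_and, not_exists]
        intro j hj
        exact (Fin.castSucc_lt_last j).ne hj
      have h := hiid.indepFun_finset
        (Finset.image Fin.castSucc (Finset.univ : Finset (Fin n)))
        ({Fin.last n} : Finset (Fin (n+1))) hdisj hmeas
      have hmemS : ∀ j : Fin n, j.castSucc ∈
          Finset.image Fin.castSucc (Finset.univ : Finset (Fin n)) := fun j =>
        Finset.mem_image_of_mem _ (Finset.mem_univ j)
      have hmemT : Fin.last n ∈ ({Fin.last n} : Finset (Fin (n+1))) := by simp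
      have hφ : Measurable (fun g :
          {i // i ∈ Finset.image Fin.castSucc (Finset.univ : Finset (Fin n))} →
            (Fin (m+1) → ℝ) => (fun j : Fin n => g ⟨j.castSucc, hmemS j⟩)) :=
        measurable_pi_lambda _ fun j => measurable_pi_apply _
      have hψ : Measurable (fun g :
          {i // i ∈ ({Fin.last n} : Finset (Fin (n+1)))} → (Fin (m+1) → ℝ) =>
            g ⟨Fin.last n, hmemT⟩) := measurable_pi_apply _
      have h2 := h.comp hφ hψ
      have e1 : (fun g :
          {i // i ∈ Finset.image Fin.castSucc (Finset.univ : Finset (Fin n))} →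
            (Fin (m+1) → ℝ) => (fun j : Fin n => g ⟨j.castSucc, hmemS j⟩))
          ∘ (fun a (i : Finset.image Fin.castSucc (Finset.univ : Finset (Fin n))) => r i a)
          = Yf := rfl
      have e2 : (fun g :
          {i // i ∈ ({Fin.last n} : Finset (Fin (n+1)))} → (Fin (m+1) → ℝ) =>
            g ⟨Fin.last n, hmemT⟩)
          ∘ (fun a (i : ({Fin.last n} : Finset (Fin (n+1)))) => r i a) = x := by
        funext ω
        simp only [Function.comp]
        exact (hxdef ω).symm
      rwa [e1, e2] at h2
    have hmap : P.map (fun ω => (Yf ω, x ω)) = ν.prod μx :=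
      (indepFun_iff_map_prod_eq_prod_map_map hYmeas.aemeasurable hxmeas.aemeasurable).1 hYx
    -- the deficiency as a function on the product space
    set G : (Fin n → Fin (m+1) → ℝ) × (Fin (m+1) → ℝ) → ℝ≥0∞ := fun p =>
      ENNReal.ofReal ((p.2 (Fin.last m) - wvec (gram p.1) ⬝ᵥ (p.2 ∘ Fin.castSucc))^2
        / sval (gram p.1)) with hG
    have hGmeas : Measurable G := by
      apply ENNReal.measurable_ofReal.comp
      apply Measurable.div
      · apply Measurable.pow_const
        apply Measurable.sub
        · exact (measurable_pi_apply _).comp measurable_snd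
        · simp only [dotProduct]
          apply Finset.measurable_sum
          intro j _
          exact ((measurable_wvec_gram j).comp measurable_fst).mul
            ((measurable_pi_apply _).comp measurable_snd)
      · exact measurable_sval_gram.comp measurable_fst
    have hGD : ∀ ω, ENNReal.ofReal (D ω) = G (Yf ω, x ω) := fun ω => rfl
    have hjoint : ∫⁻ ω, ENNReal.ofReal (D ω) ∂P = ∫⁻ y, ∫⁻ z, G (y, z) ∂μx ∂ν := by
      calc ∫⁻ ω, ENNReal.ofReal (D ω) ∂P = ∫⁻ ω, G (Yf ω, x ω) ∂P := rfl
        _ = ∫⁻ p, G p ∂(P.map fun ω => (Yf ω, x ω)) :=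
            (lintegral_map hGmeas (hYmeas.prodMk hxmeas)).symm
        _ = ∫⁻ p, G p ∂(ν.prod μx) := by rw [hmap]
        _ = ∫⁻ y, ∫⁻ z, G (y, z) ∂μx ∂ν := lintegral_prod _ hGmeas.aemeasurable
    -- a.e. positive definiteness under ν
    have hgramdetmeas : Measurable (fun y : Fin n → Fin (m+1) → ℝ => (gram y).det) :=
      measurable_of_det.comp (measurable_pi_lambda _ fun i =>
        measurable_pi_lambda _ fun j => measurable_gram_entry i j)
    have hPDnu : ∀ᵐ y ∂ν, (gram y).PosDef := by
      have h1 : ∀ᵐ y ∂ν, (gram y).det ≠ 0 := by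
        rw [hν]
        exact (ae_map_iff hYmeas.aemeasurable
          ((hgramdetmeas (measurableSet_singleton (0:ℝ))).compl)).2 hdet
      filter_upwards [h1] with y h
      exact posDef_of _ (gram_posSemidef _) (isUnit_iff_ne_zero.2 h)
    -- inner estimate
    have key_inner : ∀ᵐ y ∂ν,
        ENNReal.ofReal (sval (gram y))⁻¹ ≤ ∫⁻ z, G (y, z) ∂μx := by
      filter_upwards [hPDnu] with y hy
      have hs := sval_pos hy
      set w : Fin m → ℝ := wvec (gram y) with hw
      set cv : Fin (m+1) → ℝ := Fin.snoc (-w) 1 with hcv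
      have hcvd : ∀ z : Fin (m+1) → ℝ,
          cv ⬝ᵥ z = z (Fin.last m) - w ⬝ᵥ (z ∘ Fin.castSucc) := by
        intro z
        rw [hcv, dot_snoc, neg_dotProduct]
        ring
      obtain ⟨hint, hval⟩ := sq_dot_integral P x hxmeas hsec cv
      have hzmeas : Measurable (fun z : Fin (m+1) → ℝ =>
          ENNReal.ofReal ((z (Fin.last m) - w ⬝ᵥ (z ∘ Fin.castSucc))^2)) := by
        apply ENNReal.measurable_ofReal.comp
        apply Measurable.pow_const
        apply Measurable.sub (measurable_pi_apply _)
        simp only [dotProduct]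
        exact Finset.measurable_sum _ fun j _ =>
          measurable_const.mul ((measurable_pi_apply _))
      have hinner1 : (1 : ℝ≥0∞)
          ≤ ∫⁻ z, ENNReal.ofReal ((z (Fin.last m) - w ⬝ᵥ (z ∘ Fin.castSucc))^2) ∂μx := by
        have hstep : ∫⁻ z, ENNReal.ofReal ((z (Fin.last m) - w ⬝ᵥ (z ∘ Fin.castSucc))^2) ∂μx
            = ∫⁻ ω, ENNReal.ofReal ((cv ⬝ᵥ x ω)^2) ∂P := by
          rw [hμx, lintegral_map hzmeas hxmeas]
          apply lintegral_congr
          intro ω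
          rw [hcvd]
        rw [hstep, ← ofReal_integral_eq_lintegral_ofReal hint
          (Filter.Eventually.of_forall fun ω => sq_nonneg _), hval]
        calc (1:ℝ≥0∞) = ENNReal.ofReal ((cv (Fin.last m))^2) := by
              rw [hcv]; simp
          _ ≤ ENNReal.ofReal (∑ a, (cv a)^2) := ENNReal.ofReal_le_ofReal
              (Finset.single_le_sum (fun i _ => sq_nonneg (cv i)) (Finset.mem_univ _))
      calc ENNReal.ofReal (sval (gram y))⁻¹
          = 1 * ENNReal.ofReal (sval (gram y))⁻¹ := (one_mul _).symm
        _ ≤ (∫⁻ z, ENNReal.ofReal ((z (Fin.last m) - w ⬝ᵥ (z ∘ Fin.castSucc))^2) ∂μx)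
            * ENNReal.ofReal (sval (gram y))⁻¹ := mul_le_mul_left hinner1 _
        _ = ∫⁻ z, ENNReal.ofReal ((z (Fin.last m) - w ⬝ᵥ (z ∘ Fin.castSucc))^2)
            * ENNReal.ofReal (sval (gram y))⁻¹ ∂μx := (lintegral_mul_const _ hzmeas).symm
        _ = ∫⁻ z, G (y, z) ∂μx := by
            apply lintegral_congr
            intro z
            rw [hG]
            simp only
            rw [div_eq_mul_inv, ENNReal.ofReal_mul (sq_nonneg _), hw]
    -- outer estimate
    have hSmeas : Measurable fun y : Fin n → Fin (m+1) → ℝ =>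
        ENNReal.ofReal (sval (gram y)) := ENNReal.measurable_ofReal.comp measurable_sval_gram
    have hsposnu : ∀ᵐ y ∂ν, 0 < sval (gram y) := hPDnu.mono fun y hy => sval_pos hy
    have houter : (n:ℝ≥0∞)⁻¹ ≤ ∫⁻ y, ENNReal.ofReal (sval (gram y))⁻¹ ∂ν := by
      set SS : (Fin n → Fin (m+1) → ℝ) → ℝ≥0∞ :=
        fun y => ENNReal.ofReal (sval (gram y)) with hSS
      -- ∫⁻ SS ≤ n
      have hsqint : Integrable (fun ω => x ω (Fin.last m) * x ω (Fin.last m)) P := by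
        by_contra h
        have h0 := integral_undef (μ := P) (f := fun ω => x ω (Fin.last m) * x ω (Fin.last m)) h
        rw [hsec _ _] at h0
        simp at h0
      have hSle : ∫⁻ y, SS y ∂ν ≤ (n:ℝ≥0∞) := by
        have h1 : ∫⁻ y, SS y ∂ν ≤ ∫⁻ y, ENNReal.ofReal (cval (gram y)) ∂ν :=
          lintegral_mono_ae (hPDnu.mono fun y hy =>
            ENNReal.ofReal_le_ofReal (sval_le_cval hy))
        have h2 : ∫⁻ y, ENNReal.ofReal (cval (gram y)) ∂ν
            = ∑ i : Fin n, ∫⁻ y, ENNReal.ofReal ((y i (Fin.last m))^2) ∂ν := by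
          have he : ∀ y : Fin n → Fin (m+1) → ℝ, ENNReal.ofReal (cval (gram y))
              = ∑ i : Fin n, ENNReal.ofReal ((y i (Fin.last m))^2) := by
            intro y
            rw [cval_gram, ENNReal.ofReal_sum_of_nonneg (fun i _ => sq_nonneg _)]
          simp_rw [he]
          exact lintegral_finset_sum _ fun i _ => ENNReal.measurable_ofReal.comp
            (((measurable_pi_apply _).comp (measurable_pi_apply i)).pow_const 2)
        have hmeasz : Measurable fun z : Fin (m+1) → ℝ =>
            ENNReal.ofReal ((z (Fin.last m))^2) :=
          ENNReal.measurable_ofReal.comp ((measurable_pi_apply _).pow_const 2)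
        have h3 : ∀ i : Fin n, ∫⁻ y, ENNReal.ofReal ((y i (Fin.last m))^2) ∂ν = 1 := by
          intro i
          calc ∫⁻ y, ENNReal.ofReal ((y i (Fin.last m))^2) ∂ν
              = ∫⁻ ω, ENNReal.ofReal ((Yf ω i (Fin.last m))^2) ∂P := by
                rw [hν]
                exact lintegral_map (ENNReal.measurable_ofReal.comp
                  (((measurable_pi_apply _).comp (measurable_pi_apply i)).pow_const 2)) hYmeas
            _ = ∫⁻ z, ENNReal.ofReal ((z (Fin.last m))^2) ∂(P.map (r i.castSucc)) :=
                (lintegral_map hmeasz (hmeas _)).symm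
            _ = ∫⁻ z, ENNReal.ofReal ((z (Fin.last m))^2) ∂(P.map (r (Fin.last n))) := by
                rw [hident i.castSucc]
            _ = ∫⁻ ω, ENNReal.ofReal ((x ω (Fin.last m))^2) ∂P := by
                rw [hxer]
                exact lintegral_map hmeasz (hmeas _)
            _ = ENNReal.ofReal (∫ ω, (x ω (Fin.last m))^2 ∂P) :=
                (ofReal_integral_eq_lintegral_ofReal (by simpa [sq] using hsqint)
                  (Filter.Eventually.of_forall fun ω => sq_nonneg _)).symm
            _ = 1 := by
                have hv : ∫ ω, (x ω (Fin.last m))^2 ∂P = 1 := by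
                  simp_rw [sq]
                  rw [hsec]
                  simp
                rw [hv, ENNReal.ofReal_one]
        refine le_trans h1 ?_
        rw [h2]
        simp_rw [h3]
        simp
      -- Cauchy–Schwarz
      have hCS : (1:ℝ≥0∞) ≤ (∫⁻ y, SS y ∂ν) ^ (1/2:ℝ)
          * (∫⁻ y, (SS y)⁻¹ ∂ν) ^ (1/2:ℝ) := by
        have hconj : Real.HolderConjugate 2 2 := Real.HolderConjugate.two_two
        have hf : AEMeasurable (fun y => (SS y) ^ (1/2:ℝ)) ν :=
          (hSmeas.pow_const _).aemeasurable
        have hg : AEMeasurable (fun y => ((SS y)⁻¹) ^ (1/2:ℝ)) ν :=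
          (hSmeas.inv.pow_const _).aemeasurable
        have h := ENNReal.lintegral_mul_le_Lp_mul_Lq ν hconj hf hg
        have hone : ∫⁻ y, ((fun y => (SS y) ^ (1/2:ℝ)) * fun y => ((SS y)⁻¹) ^ (1/2:ℝ)) y ∂ν
            = 1 := by
          have hae : ∀ᵐ y ∂ν, ((fun y => (SS y) ^ (1/2:ℝ))
              * fun y => ((SS y)⁻¹) ^ (1/2:ℝ)) y = 1 := by
            filter_upwards [hsposnu] with y hy
            simp only [Pi.mul_apply]
            rw [← ENNReal.mul_rpow_of_nonneg _ _ (by norm_num : (0:ℝ) ≤ 1/2),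
              ENNReal.mul_inv_cancel (ENNReal.ofReal_pos.2 hy).ne' ENNReal.ofReal_ne_top,
              ENNReal.one_rpow]
          rw [lintegral_congr_ae hae]
          simp
        rw [hone] at h
        have he1 : ∀ y, ((SS y) ^ (1/2:ℝ)) ^ (2:ℝ) = SS y := by
          intro y
          rw [← ENNReal.rpow_mul]
          norm_num
        have he2 : ∀ y, (((SS y)⁻¹) ^ (1/2:ℝ)) ^ (2:ℝ) = (SS y)⁻¹ := by
          intro y
          rw [← ENNReal.rpow_mul]
          norm_num
        simp_rw [he1, he2] at h
        exact h
      have h2 : (1:ℝ≥0∞) ≤ (n:ℝ≥0∞) * ∫⁻ y, (SS y)⁻¹ ∂ν := by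
        have hr1 : (∫⁻ y, SS y ∂ν) ^ (1/2:ℝ) ≤ (n:ℝ≥0∞) ^ (1/2:ℝ) :=
          ENNReal.rpow_le_rpow hSle (by norm_num)
        have hh := le_trans hCS (mul_le_mul_left hr1 _)
        rw [← ENNReal.mul_rpow_of_nonneg _ _ (by norm_num : (0:ℝ) ≤ 1/2)] at hh
        have hh2 := ENNReal.rpow_le_rpow hh (by norm_num : (0:ℝ) ≤ 2)
        rw [ENNReal.one_rpow, ← ENNReal.rpow_mul] at hh2
        have hexp : (1:ℝ)/2 * 2 = 1 := by norm_num
        rw [hexp, ENNReal.rpow_one] at hh2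
        exact hh2
      have hn0 : (n:ℝ≥0∞) ≠ 0 := by
        simpa using hn.ne'
      calc (n:ℝ≥0∞)⁻¹ = (n:ℝ≥0∞)⁻¹ * 1 := (mul_one _).symm
        _ ≤ (n:ℝ≥0∞)⁻¹ * ((n:ℝ≥0∞) * ∫⁻ y, (SS y)⁻¹ ∂ν) := mul_le_mul_right h2 _
        _ = ∫⁻ y, (SS y)⁻¹ ∂ν := by
            rw [← mul_assoc, ENNReal.inv_mul_cancel hn0 (ENNReal.natCast_ne_top n), one_mul]
        _ = ∫⁻ y, ENNReal.ofReal (sval (gram y))⁻¹ ∂ν := lintegral_congr_ae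
            (hsposnu.mono fun y hy => (ENNReal.ofReal_inv_of_pos hy).symm)
    -- assemble
    have hchain : (n:ℝ≥0∞)⁻¹ ≤ ∫⁻ ω, ENNReal.ofReal (D ω) ∂P := by
      rw [hjoint]
      exact le_trans houter (lintegral_mono_ae key_inner)
    have hofn : ∫⁻ ω, ENNReal.ofReal ((n:ℝ) * D ω) ∂P
        = (n:ℝ≥0∞) * ∫⁻ ω, ENNReal.ofReal (D ω) ∂P := by
      have h := lintegral_const_mul (μ := P) (ENNReal.ofReal (n:ℝ))
        (ENNReal.measurable_ofReal.comp hDmeas)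
      simp only [Function.comp] at h
      calc ∫⁻ ω, ENNReal.ofReal ((n:ℝ) * D ω) ∂P
          = ∫⁻ ω, ENNReal.ofReal (n:ℝ) * ENNReal.ofReal (D ω) ∂P := by
            simp_rw [ENNReal.ofReal_mul (show (0:ℝ) ≤ (n:ℝ) from Nat.cast_nonneg n)]
        _ = ENNReal.ofReal (n:ℝ) * ∫⁻ ω, ENNReal.ofReal (D ω) ∂P := h
        _ = (n:ℝ≥0∞) * ∫⁻ ω, ENNReal.ofReal (D ω) ∂P := by rw [ENNReal.ofReal_natCast]
    have h1le : (1:ℝ≥0∞) ≤ ∫⁻ ω, ENNReal.ofReal ((n:ℝ) * D ω) ∂P := by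
      rw [hofn]
      calc (1:ℝ≥0∞) = (n:ℝ≥0∞) * (n:ℝ≥0∞)⁻¹ :=
            (ENNReal.mul_inv_cancel (by simpa using hn.ne') (ENNReal.natCast_ne_top n)).symm
        _ ≤ _ := mul_le_mul_right hchain _
    have hfin : ∫⁻ ω, ENNReal.ofReal ((n:ℝ) * D ω) ∂P ≠ ⊤ := by
      have hle : ∫⁻ ω, ENNReal.ofReal ((n:ℝ) * D ω) ∂P ≤ ∫⁻ ω, ‖(n:ℝ) * D ω‖ₑ ∂P :=
        lintegral_mono fun ω => Real.ofReal_le_enorm _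
      exact ne_top_of_le_ne_top hnDint.2.ne hle
    rw [integral_eq_lintegral_of_nonneg_ae
      (hDnn.mono fun ω h => mul_nonneg (Nat.cast_nonneg n) h)
      ((measurable_const.mul hDmeas).aestronglyMeasurable)]
    have := ENNReal.toReal_mono hfin h1le
    simpa using this
  -- conclude
  have hsum : ∫ ω, ((n : ℝ) * (x' ω ⬝ᵥ (((X' ω)ᵀ * X' ω)⁻¹ *ᵥ x' ω)) + (n : ℝ) * D ω) ∂P
      ≤ ∫ ω, (n : ℝ) * (x ω ⬝ᵥ (((X ω)ᵀ * X ω)⁻¹ *ᵥ x ω)) ∂P :=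
    integral_mono_ae (hκ'int.add hnDint) hκint hbound
  rw [integral_add hκ'int hnDint] at hsum
  linarith
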